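/- Let S, Y, X, Z be random variables with values in finite nonempty types on a common probability space such that S and Y are independent, Z = f(X) for a deterministic function f, and Z is sufficient for Y, i.e. I(Z;Y) = I(X;Y). Then the residual ε := I(Z;Y|S) − I(X;Y) is nonnegative: ε ≥ 0. -/

import Mathlib

open MeasureTheory ProbabilityTheory
open scoped BigOperators

/-- Shannon entropy (in nats) of a random variable `X` with values in a finite type,
with respect to the measure `μ`. -/
noncomputable def finEntropy {Ω : Type*} [MeasurableSpace Ω] (μ : Measure Ω)
    {α : Type*} [Fintype α] (X : Ω → α) : ℝ :=
  - ∑ a : α, (μ (X ⁻¹' {a})).toReal * Real.log (μ (X ⁻¹' {a})).toReal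

/-- Conditional Shannon entropy `H(X|Z) = H(X,Z) - H(Z)`. -/
noncomputable def finCondEntropy {Ω : Type*} [MeasurableSpace Ω] (μ : Measure Ω)
    {α β : Type*} [Fintype α] [Fintype β] (X : Ω → α) (Z : Ω → β) : ℝ :=
  finEntropy μ (fun ω => (X ω, Z ω)) - finEntropy μ Z

/-- Shannon mutual information `I(X;Y) = H(X) + H(Y) - H(X,Y)`. -/
noncomputable def finMutualInfo {Ω : Type*} [MeasurableSpace Ω] (μ : Measure Ω)
    {α β : Type*} [Fintype α] [Fintype β] (X : Ω → α) (Y : Ω → β) : ℝ :=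
  finEntropy μ X + finEntropy μ Y - finEntropy μ (fun ω => (X ω, Y ω))

/-- Conditional Shannon mutual information
`I(X;Y|S) = H(X,S) + H(Y,S) - H(X,Y,S) - H(S)`. -/
noncomputable def finCondMutualInfo {Ω : Type*} [MeasurableSpace Ω] (μ : Measure Ω)
    {α β γ : Type*} [Fintype α] [Fintype β] [Fintype γ]
    (X : Ω → α) (Y : Ω → β) (S : Ω → γ) : ℝ :=
  finEntropy μ (fun ω => (X ω, S ω)) + finEntropy μ (fun ω => (Y ω, S ω))
    - finEntropy μ (fun ω => (X ω, Y ω, S ω)) - finEntropy μ S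

open Real

private lemma pointwise_log_ineq {p pA pB pC : ℝ} (hp : 0 ≤ p) (hpA : p ≤ pA) (hpB : p ≤ pB)
    (hAC : pA ≤ pC) (h0B : 0 ≤ pB) (h0C : 0 ≤ pC) :
    p * log pA + p * log pB - p * log p - p * log pC ≤ pA * pB / pC - p := by
  rcases eq_or_lt_of_le hp with h | h
  · rw [← h]
    have h0A : (0:ℝ) ≤ pA := h ▸ hpA
    have : (0:ℝ) ≤ pA * pB / pC := div_nonneg (mul_nonneg h0A h0B) h0C
    simp only [zero_mul, sub_zero, add_zero]
    linarith
  · have hA : 0 < pA := lt_of_lt_of_le h hpA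
    have hB : 0 < pB := lt_of_lt_of_le h hpB
    have hC : 0 < pC := lt_of_lt_of_le hA hAC
    have key : log (pA * pB / (p * pC)) ≤ pA * pB / (p * pC) - 1 :=
      log_le_sub_one_of_pos (by positivity)
    have hlog : log (pA * pB / (p * pC)) = log pA + log pB - log p - log pC := by
      rw [log_div (by positivity) (by positivity), log_mul hA.ne' hB.ne',
        log_mul h.ne' hC.ne']
      ring
    have := mul_le_mul_of_nonneg_left key hp
    rw [hlog] at this
    have h2 : p * (pA * pB / (p * pC) - 1) = pA * pB / pC - p := by
      field_simp
    nlinarith [this]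

private lemma superadd {α β : Type*} [Fintype α] [Fintype β]
    (q : α → β → ℝ) (hq : ∀ a b, 0 ≤ q a b) :
    ∑ a, (∑ b, q a b) * log (∑ b, q a b) + ∑ b, (∑ a, q a b) * log (∑ a, q a b)
      ≤ ∑ a, ∑ b, q a b * log (q a b)
        + (∑ a, ∑ b, q a b) * log (∑ a, ∑ b, q a b) := by
  classical
  set Q : ℝ := ∑ a, ∑ b, q a b with hQ
  set pA : α → ℝ := fun a => ∑ b, q a b with hpA
  set pB : β → ℝ := fun b => ∑ a, q a b with hpB
  show ∑ a, pA a * log (pA a) + ∑ b, pB b * log (pB b)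
      ≤ ∑ a, ∑ b, q a b * log (q a b) + Q * log Q
  have hQ0 : 0 ≤ Q := Finset.sum_nonneg fun a _ => Finset.sum_nonneg fun b _ => hq a b
  rcases eq_or_lt_of_le hQ0 with h0 | hQpos
  · have hzero : ∀ a b, q a b = 0 := by
      intro a b
      have h1 : ∀ a ∈ Finset.univ, (0:ℝ) ≤ ∑ b, q a b :=
        fun a _ => Finset.sum_nonneg fun b _ => hq a b
      have h2 := (Finset.sum_eq_zero_iff_of_nonneg h1).mp h0.symm a (Finset.mem_univ a)
      exact (Finset.sum_eq_zero_iff_of_nonneg (fun b _ => hq a b)).mp h2 b (Finset.mem_univ b)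
    have hQz : Q = 0 := h0.symm
    simp [hpA, hpB, hzero, hQz]
  · have hpA0 : ∀ a, 0 ≤ pA a := fun a => Finset.sum_nonneg fun b _ => hq a b
    have hpB0 : ∀ b, 0 ≤ pB b := fun b => Finset.sum_nonneg fun a _ => hq a b
    have hAQ : ∀ a, pA a ≤ Q := fun a =>
      Finset.single_le_sum (fun a _ => hpA0 a) (Finset.mem_univ a)
    have hsumB : ∑ b, pB b = Q := Finset.sum_comm
    have hsumA : ∑ a, pA a = Q := rfl
    have main : ∑ a, ∑ b, (q a b * log (pA a) + q a b * log (pB b)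
        - q a b * log (q a b) - q a b * log Q)
        ≤ ∑ a, ∑ b, (pA a * pB b / Q - q a b) := by
      refine Finset.sum_le_sum fun a _ => Finset.sum_le_sum fun b _ => ?_
      exact pointwise_log_ineq (hq a b)
        (Finset.single_le_sum (fun b _ => hq a b) (Finset.mem_univ b))
        (Finset.single_le_sum (fun a _ => hq a b) (Finset.mem_univ a))
        (hAQ a) (hpB0 b) hQ0
    have hRHS : ∑ a, ∑ b, (pA a * pB b / Q - q a b) = 0 := by
      have h1 : ∑ a, ∑ b, pA a * pB b / Q = Q := by
        have h2 : ∀ a, ∑ b, pA a * pB b / Q = pA a * Q / Q := by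
          intro a
          rw [← Finset.sum_div, ← Finset.mul_sum, hsumB]
        simp only [h2]
        rw [← Finset.sum_div, ← Finset.sum_mul, hsumA]
        field_simp
      simp only [Finset.sum_sub_distrib]
      rw [h1, ← hQ]
      ring
    have hL1 : ∑ a, ∑ b, q a b * log (pA a) = ∑ a, pA a * log (pA a) := by
      refine Finset.sum_congr rfl fun a _ => ?_
      rw [← Finset.sum_mul]
    have hL2 : ∑ a, ∑ b, q a b * log (pB b) = ∑ b, pB b * log (pB b) := by
      rw [Finset.sum_comm]
      refine Finset.sum_congr rfl fun b _ => ?_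
      rw [← Finset.sum_mul]
    have hL4 : ∑ a, ∑ b, q a b * log Q = Q * log Q := by
      simp_rw [← Finset.sum_mul]
      rfl
    have expand : ∑ a, ∑ b, (q a b * log (pA a) + q a b * log (pB b)
        - q a b * log (q a b) - q a b * log Q)
        = ∑ a, pA a * log (pA a) + ∑ b, pB b * log (pB b)
          - ∑ a, ∑ b, q a b * log (q a b) - Q * log Q := by
      simp only [Finset.sum_sub_distrib, Finset.sum_add_distrib]
      rw [hL1, hL2, hL4]
    rw [expand, hRHS] at main
    linarith

private lemma indep_split {β γ : Type*} [Fintype β] [Fintype γ]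
    (u : β → ℝ) (v : γ → ℝ) (hu : ∀ y, 0 ≤ u y) (hv : ∀ s, 0 ≤ v s)
    (hus : ∑ y, u y = 1) (hvs : ∑ s, v s = 1) :
    ∑ y, ∑ s, (u y * v s) * log (u y * v s)
      = ∑ y, u y * log (u y) + ∑ s, v s * log (v s) := by
  have point : ∀ y s, (u y * v s) * log (u y * v s)
      = v s * (u y * log (u y)) + u y * (v s * log (v s)) := by
    intro y s
    rcases eq_or_lt_of_le (hu y) with h | h
    · simp [← h]
    rcases eq_or_lt_of_le (hv s) with h' | h'
    · simp [← h']
    · rw [log_mul h.ne' h'.ne']; ring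
  have h1 : ∀ y, ∑ s, (v s * (u y * log (u y)) + u y * (v s * log (v s)))
      = u y * log (u y) + u y * (∑ s, v s * log (v s)) := by
    intro y
    rw [Finset.sum_add_distrib, ← Finset.sum_mul, hvs, one_mul, ← Finset.mul_sum]
  simp_rw [point]
  rw [Finset.sum_congr rfl fun y _ => h1 y, Finset.sum_add_distrib, ← Finset.sum_mul, hus,
    one_mul]

open MeasureTheory ProbabilityTheory

private lemma meas_union_toReal {Ω : Type*} [MeasurableSpace Ω] (μ : Measure Ω)
    [IsProbabilityMeasure μ] {ι : Type*} [Fintype ι] (t : ι → Set Ω)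
    (ht : ∀ i, MeasurableSet (t i)) (hd : Pairwise (Function.onFun Disjoint t)) :
    (μ (⋃ i, t i)).toReal = ∑ i, (μ (t i)).toReal := by
  rw [measure_iUnion hd ht, tsum_fintype]
  exact ENNReal.toReal_sum fun i _ => measure_ne_top μ _

private lemma disjoint_of_subset_fiber {Ω γ : Type*} (W : Ω → γ) (t : γ → Set Ω)
    (h : ∀ c, t c ⊆ W ⁻¹' {c}) : Pairwise (Function.onFun Disjoint t) := by
  intro c c' hcc'
  refine Set.disjoint_left.2 fun ω h1 h2 => hcc' ?_
  have e1 : W ω = c := h c h1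
  have e2 : W ω = c' := h c' h2
  rw [← e1, ← e2]

private lemma sum_meas_preimage {Ω : Type*} [MeasurableSpace Ω] (μ : Measure Ω)
    [IsProbabilityMeasure μ] {α : Type*} [Fintype α] [MeasurableSpace α]
    [MeasurableSingletonClass α] (W : Ω → α) (hW : Measurable W) :
    ∑ a, (μ (W ⁻¹' {a})).toReal = 1 := by
  rw [← meas_union_toReal μ _ (fun a => hW (measurableSet_singleton a))
    (disjoint_of_subset_fiber W _ (fun a => subset_rfl))]
  have huniv : ⋃ a, W ⁻¹' {a} = Set.univ := by
    ext ω; simp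
  simp [huniv]

theorem residual_nonneg {Ω : Type*} [MeasurableSpace Ω]
    (μ : Measure Ω) [IsProbabilityMeasure μ]
    {𝒮 𝒴 𝒳 𝒵 : Type*}
    [Fintype 𝒮] [Nonempty 𝒮] [MeasurableSpace 𝒮] [MeasurableSingletonClass 𝒮]
    [Fintype 𝒴] [Nonempty 𝒴] [MeasurableSpace 𝒴] [MeasurableSingletonClass 𝒴]
    [Fintype 𝒳] [Nonempty 𝒳] [MeasurableSpace 𝒳] [MeasurableSingletonClass 𝒳]
    [Fintype 𝒵] [Nonempty 𝒵] [MeasurableSpace 𝒵] [MeasurableSingletonClass 𝒵]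
    (S : Ω → 𝒮) (Y : Ω → 𝒴) (X : Ω → 𝒳) (Z : Ω → 𝒵)
    (hS : Measurable S) (hY : Measurable Y) (hX : Measurable X) (hZ : Measurable Z)
    (hindep : IndepFun S Y μ)
    (f : 𝒳 → 𝒵) (hZf : Z = f ∘ X)
    (hsuff : finMutualInfo μ Z Y = finMutualInfo μ X Y) :
    finCondMutualInfo μ Z Y S - finMutualInfo μ X Y ≥ 0 := by
  classical
  rw [← hsuff]
  -- the joint distribution atoms
  set q : 𝒵 → 𝒴 → 𝒮 → ℝ :=
    fun z y s => (μ (Z ⁻¹' {z} ∩ Y ⁻¹' {y} ∩ S ⁻¹' {s})).toReal with hqdef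
  have hq0 : ∀ z y s, 0 ≤ q z y s := fun _ _ _ => ENNReal.toReal_nonneg
  have mZ : ∀ z, MeasurableSet (Z ⁻¹' {z}) := fun z => hZ (measurableSet_singleton z)
  have mY : ∀ y, MeasurableSet (Y ⁻¹' {y}) := fun y => hY (measurableSet_singleton y)
  have mS : ∀ s, MeasurableSet (S ⁻¹' {s}) := fun s => hS (measurableSet_singleton s)
  -- marginals
  have hZYm : ∀ z y, (μ (Z ⁻¹' {z} ∩ Y ⁻¹' {y})).toReal = ∑ s, q z y s := by
    intro z y
    have hset : Z ⁻¹' {z} ∩ Y ⁻¹' {y} = ⋃ s, Z ⁻¹' {z} ∩ Y ⁻¹' {y} ∩ S ⁻¹' {s} := by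
      ext ω; simp
    rw [hset, meas_union_toReal μ _ (fun s => ((mZ z).inter (mY y)).inter (mS s))
      (disjoint_of_subset_fiber S _ (fun s ω hω => hω.2))]
  have hZY : ∀ z y, (μ ((fun ω => (Z ω, Y ω)) ⁻¹' {(z, y)})).toReal = ∑ s, q z y s := by
    intro z y
    have hset : (fun ω => (Z ω, Y ω)) ⁻¹' {(z, y)} = Z ⁻¹' {z} ∩ Y ⁻¹' {y} := by
      ext ω; simp [Prod.ext_iff]
    rw [hset, hZYm]
  have hZS : ∀ z s, (μ ((fun ω => (Z ω, S ω)) ⁻¹' {(z, s)})).toReal = ∑ y, q z y s := by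
    intro z s
    have hset : (fun ω => (Z ω, S ω)) ⁻¹' {(z, s)}
        = ⋃ y, Z ⁻¹' {z} ∩ Y ⁻¹' {y} ∩ S ⁻¹' {s} := by
      ext ω; simp [Prod.ext_iff] <;> tauto
    rw [hset, meas_union_toReal μ _ (fun y => ((mZ z).inter (mY y)).inter (mS s))
      (disjoint_of_subset_fiber Y _ (fun y ω hω => hω.1.2))]
  have hZm : ∀ z, (μ (Z ⁻¹' {z})).toReal = ∑ y, ∑ s, q z y s := by
    intro z
    have hset : Z ⁻¹' {z} = ⋃ y, Z ⁻¹' {z} ∩ Y ⁻¹' {y} := by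
      ext ω; simp
    rw [hset, meas_union_toReal μ _ (fun y => (mZ z).inter (mY y))
      (disjoint_of_subset_fiber Y _ (fun y ω hω => hω.2))]
    exact Finset.sum_congr rfl fun y _ => hZYm z y
  have hqtriple : ∀ z y s, (μ ((fun ω => (Z ω, Y ω, S ω)) ⁻¹' {(z, y, s)})).toReal
      = q z y s := by
    intro z y s
    have hset : (fun ω => (Z ω, Y ω, S ω)) ⁻¹' {(z, y, s)}
        = Z ⁻¹' {z} ∩ Y ⁻¹' {y} ∩ S ⁻¹' {s} := by
      ext ω; simp [Prod.ext_iff, and_assoc]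
    rw [hset]
  -- entropies as sums of q
  have eZY : finEntropy μ (fun ω => (Z ω, Y ω))
      = -∑ z, ∑ y, (∑ s, q z y s) * Real.log (∑ s, q z y s) := by
    rw [finEntropy, Fintype.sum_prod_type]
    congr 1
    exact Finset.sum_congr rfl fun z _ => Finset.sum_congr rfl fun y _ => by rw [hZY z y]
  have eZS : finEntropy μ (fun ω => (Z ω, S ω))
      = -∑ z, ∑ s, (∑ y, q z y s) * Real.log (∑ y, q z y s) := by
    rw [finEntropy, Fintype.sum_prod_type]
    congr 1
    exact Finset.sum_congr rfl fun z _ => Finset.sum_congr rfl fun s _ => by rw [hZS z s]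
  have eZYS : finEntropy μ (fun ω => (Z ω, Y ω, S ω))
      = -∑ z, ∑ y, ∑ s, q z y s * Real.log (q z y s) := by
    rw [finEntropy, Fintype.sum_prod_type]
    congr 1
    refine Finset.sum_congr rfl fun z _ => ?_
    rw [Fintype.sum_prod_type]
    exact Finset.sum_congr rfl fun y _ => Finset.sum_congr rfl fun s _ => by
      rw [hqtriple z y s]
  have eZ : finEntropy μ Z
      = -∑ z, (∑ y, ∑ s, q z y s) * Real.log (∑ y, ∑ s, q z y s) := by
    rw [finEntropy]
    congr 1
    exact Finset.sum_congr rfl fun z _ => by rw [hZm z]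
  -- independence: H(Y,S) = H(Y) + H(S)
  have eYS : finEntropy μ (fun ω => (Y ω, S ω)) = finEntropy μ Y + finEntropy μ S := by
    have hprod : ∀ y s, (μ ((fun ω => (Y ω, S ω)) ⁻¹' {(y, s)})).toReal
        = (μ (Y ⁻¹' {y})).toReal * (μ (S ⁻¹' {s})).toReal := by
      intro y s
      have hset : (fun ω => (Y ω, S ω)) ⁻¹' {(y, s)} = S ⁻¹' {s} ∩ Y ⁻¹' {y} := by
        ext ω; simp [Prod.ext_iff] <;> tauto
      rw [hset, hindep.measure_inter_preimage_eq_mul _ _ (measurableSet_singleton s)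
        (measurableSet_singleton y), ENNReal.toReal_mul, mul_comm]
    rw [finEntropy, finEntropy, finEntropy, Fintype.sum_prod_type]
    have := indep_split (fun y => (μ (Y ⁻¹' {y})).toReal) (fun s => (μ (S ⁻¹' {s})).toReal)
      (fun _ => ENNReal.toReal_nonneg) (fun _ => ENNReal.toReal_nonneg)
      (sum_meas_preimage μ Y hY) (sum_meas_preimage μ S hS)
    rw [show ∑ y, ∑ s, (μ ((fun ω => (Y ω, S ω)) ⁻¹' {(y, s)})).toReal
        * Real.log (μ ((fun ω => (Y ω, S ω)) ⁻¹' {(y, s)})).toReal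
        = ∑ y, ∑ s, ((μ (Y ⁻¹' {y})).toReal * (μ (S ⁻¹' {s})).toReal)
          * Real.log ((μ (Y ⁻¹' {y})).toReal * (μ (S ⁻¹' {s})).toReal) from
      Finset.sum_congr rfl fun y _ => Finset.sum_congr rfl fun s _ => by rw [hprod y s],
      this]
    ring
  -- the key inequality: sum of superadditivity over z
  have key := Finset.sum_le_sum (fun z (_ : z ∈ Finset.univ) => superadd (q z) (hq0 z))
  simp only [Finset.sum_add_distrib] at key
  rw [finCondMutualInfo, finMutualInfo, eYS, eZY, eZS, eZYS, eZ]
  linarith
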